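/- The function f : (ZMod p)^n → ℝ/ℤ defined by f(x) = (∑_{i=1}^n |x_i|)/p² mod 1, where |·| is the canonical lift of ZMod p to {0,…,p−1}, is a nonclassical polynomial of degree at most p, i.e., D_{h₁}⋯D_{h_{p+1}} f ≡ 0 for all h₁,…,h_{p+1} ∈ (ZMod p)^n. -/

import Mathlib

open Finset

/-- Additive directional derivative `D_h f(x) = f(x+h) - f(x)`. -/
noncomputable def D {V M : Type*} [Add V] [AddCommGroup M] (h : V) (f : V → M) : V → M :=
  fun x => f (x + h) - f x

/-- `f` is a nonclassical polynomial of degree at most `d`: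
all `(d+1)`-fold iterated derivatives vanish identically. -/
def IsNCPoly {V M : Type*} [Add V] [AddCommGroup M] (d : ℕ) (f : V → M) : Prop :=
  ∀ hs : List V, hs.length = d + 1 → hs.foldr D f = 0

/-- `e(t) = exp(2πit)` on the torus `ℝ/ℤ`. -/
noncomputable def e : AddCircle (1 : ℝ) → ℂ :=
  Function.Periodic.lift (f := fun t : ℝ => Complex.exp (2 * (Real.pi : ℂ) * Complex.I * (t : ℂ)))
    (by
      intro t
      dsimp only
      rw [Complex.ofReal_add, Complex.ofReal_one, mul_add, mul_one, Complex.exp_add,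
        Complex.exp_two_pi_mul_I, mul_one])

section Basic

open Polynomial

variable {V M M' : Type*} [Add V] [AddCommGroup M] [AddCommGroup M']

lemma D_zero_fun (h : V) : D h (0 : V → M) = 0 := by
  funext x; simp [D]

lemma foldr_D_zero (hs : List V) : hs.foldr D (0 : V → M) = 0 := by
  induction hs with
  | nil => rfl
  | cons h t ih => simp [List.foldr, ih, D_zero_fun]

lemma D_add_fun (h : V) (f g : V → M) : D h (f + g) = D h f + D h g := by
  funext x; simp [D]; abel

lemma foldr_D_add (hs : List V) (f g : V → M) :
    hs.foldr D (f + g) = hs.foldr D f + hs.foldr D g := by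
  induction hs with
  | nil => rfl
  | cons h t ih => simp [List.foldr, ih, D_add_fun]

lemma D_comp_hom (ψ : M →+ M') (h : V) (F : V → M) :
    D h (fun x => ψ (F x)) = fun x => ψ (D h F x) := by
  funext x; simp [D]

lemma foldr_D_comp_hom (ψ : M →+ M') (hs : List V) (F : V → M) :
    hs.foldr D (fun x => ψ (F x)) = fun x => ψ (hs.foldr D F x) := by
  induction hs with
  | nil => rfl
  | cons h t ih => simp only [List.foldr, ih, D_comp_hom]

lemma D_const (h : V) (c : M) : D h (fun _ => c) = 0 := by
  funext x; simp [D]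

lemma foldr_D_const (hs : List V) (hne : hs ≠ []) (c : M) :
    hs.foldr D (fun _ => c) = 0 := by
  rcases (List.eq_nil_or_concat hs) with h | ⟨t, b, rfl⟩
  · exact absurd h hne
  · rw [List.concat_eq_append, List.foldr_append]
    simp only [List.foldr, D_const, foldr_D_zero]

lemma foldr_D_sum {ι : Type*} (s : Finset ι) (F : ι → V → M) (hs : List V) :
    hs.foldr D (∑ i ∈ s, F i) = ∑ i ∈ s, hs.foldr D (F i) := by
  classical
  induction s using Finset.induction with
  | empty => simp [foldr_D_zero]
  | @insert a s hnot ih => rw [sum_insert hnot, foldr_D_add, ih, sum_insert hnot]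

end Basic

section ZModLemmas

open Polynomial

variable {p : ℕ} [Fact p.Prime]

lemma D_eval (h : ZMod p) (q : (ZMod p)[X]) :
    D h (fun a => q.eval a) = fun a => (q.comp (X + C h) - q).eval a := by
  funext a
  simp [D, eval_comp]

lemma polyD : ∀ (k : ℕ) (hs : List (ZMod p)) (q : (ZMod p)[X]),
    hs.length = k → q.natDegree < k → hs.foldr D (fun a => q.eval a) = 0 := by
  intro k
  induction k with
  | zero => intro hs q _ hd; omega
  | succ k ih =>
    intro hs q hlen hd
    rcases List.eq_nil_or_concat hs with rfl | ⟨t, b, rfl⟩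
    · simp at hlen
    rw [List.concat_eq_append, List.foldr_append]
    simp only [List.foldr]
    rw [D_eval]
    have htlen : t.length = k := by simpa using hlen
    by_cases hq : q.natDegree = 0
    · obtain ⟨c, rfl⟩ := natDegree_eq_zero.mp hq
      have : (C c).comp (X + C b) - C c = 0 := by simp
      rw [this]
      simp only [eval_zero]
      exact foldr_D_zero (M := ZMod p) t
    · set r := q.comp (X + C b) - q with hr
      have hq0 : q ≠ 0 := fun h => hq (by simp [h])
      have hdeg : r.natDegree < q.natDegree := by
        have hcompdeg : (q.comp (X + C b)).natDegree = q.natDegree := by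
          rw [natDegree_comp, natDegree_X_add_C, mul_one]
        have hcomp0 : q.comp (X + C b) ≠ 0 := fun h => by
          rw [h, natDegree_zero] at hcompdeg; exact hq hcompdeg.symm
        have hlc : (q.comp (X + C b)).leadingCoeff = q.leadingCoeff := by
          rw [leadingCoeff_comp (by simp [natDegree_X_add_C])]
          simp [leadingCoeff_X_add_C]
        have := degree_sub_lt
          (by rw [degree_eq_natDegree hcomp0, degree_eq_natDegree hq0, hcompdeg]) hcomp0 hlc
        rcases eq_or_ne r 0 with h0 | h0
        · rw [h0, natDegree_zero]; omega
        · have h2 := natDegree_lt_natDegree h0 (by rwa [degree_eq_natDegree hcomp0] at this)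
          rw [hcompdeg] at h2
          omega
      exact ih t r htlen (by omega)

lemma funcD (F : ZMod p → ZMod p) (hs : List (ZMod p)) (hlen : hs.length = p) :
    hs.foldr D F = 0 := by
  classical
  have hinj : Set.InjOn (id : ZMod p → ZMod p) (univ : Finset (ZMod p)) := Set.injOn_id _
  set q := Lagrange.interpolate (univ : Finset (ZMod p)) id F with hq
  have hFeq : F = fun a => q.eval a := by
    funext a
    exact (Lagrange.eval_interpolate_at_node F hinj (mem_univ a)).symm
  have hdlt := Lagrange.degree_interpolate_lt F hinj
  rw [card_univ, ZMod.card] at hdlt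
  have hdeg : q.natDegree < p := by
    rcases eq_or_ne q 0 with h0 | h0
    · rw [h0, natDegree_zero]; exact (Fact.out : p.Prime).pos
    · exact (natDegree_lt_iff_degree_lt h0).mpr hdlt
  rw [hFeq]
  exact polyD p hs q hlen hdeg

lemma coe_sub_circle (x y : ℝ) :
    ((x - y : ℝ) : AddCircle (1:ℝ)) = (x : AddCircle (1:ℝ)) - y := rfl

lemma D_g (h : ZMod p) :
    D h (fun a : ZMod p => (((a.val : ℝ) / (p^2 : ℝ) : ℝ) : AddCircle (1:ℝ)))
    = fun a => ((((h.val : ℝ) / (p^2:ℝ)) : ℝ) : AddCircle (1:ℝ)) +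
        ZMod.toAddCircle (-((((a.val + h.val)/p : ℕ) : ZMod p))) := by
  haveI : NeZero p := ⟨(Fact.out : p.Prime).ne_zero⟩
  funext a
  simp only [D]
  rw [map_neg, ZMod.toAddCircle_natCast]
  set j : ℕ := (a.val + h.val) / p with hj
  have hval : (((a+h).val : ℕ) : ℝ) = (a.val : ℝ) + h.val - p * j := by
    have hm : ((((a.val + h.val) % p : ℕ)) : ℝ) + (p:ℝ) * (j:ℝ) = (a.val:ℝ) + (h.val:ℝ) := by
      exact_mod_cast Nat.mod_add_div (a.val + h.val) p
    rw [ZMod.val_add]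
    linarith
  rw [← coe_sub_circle, ← sub_eq_add_neg, ← coe_sub_circle]
  congr 1
  have hp0 : (p : ℝ) ≠ 0 := Nat.cast_ne_zero.mpr (Fact.out : p.Prime).ne_zero
  rw [hval]
  field_simp
  ring

/-- The single-variable function `a ↦ val a / p²` is killed by `p+1` derivatives. -/
lemma gNC (hs : List (ZMod p)) (hlen : hs.length = p + 1) :
    hs.foldr D (fun a : ZMod p => (((a.val : ℝ) / (p^2:ℝ) : ℝ) : AddCircle (1:ℝ))) = 0 := by
  haveI : NeZero p := ⟨(Fact.out : p.Prime).ne_zero⟩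
  rcases List.eq_nil_or_concat hs with rfl | ⟨t, b, rfl⟩
  · simp at hlen
  have htlen : t.length = p := by simpa using hlen
  have htne : t ≠ [] := by
    intro h
    rw [h] at htlen
    exact (Fact.out : p.Prime).ne_zero htlen.symm
  rw [List.concat_eq_append, List.foldr_append]
  simp only [List.foldr]
  rw [D_g]
  have hsplit :
      (fun a : ZMod p => ((((b.val : ℝ) / (p^2:ℝ)) : ℝ) : AddCircle (1:ℝ)) +
        ZMod.toAddCircle (-((((a.val + b.val)/p : ℕ) : ZMod p))))
      = (fun _ : ZMod p => ((((b.val : ℝ) / (p^2:ℝ)) : ℝ) : AddCircle (1:ℝ))) +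
        (fun a : ZMod p =>
          ZMod.toAddCircle (-((((a.val + b.val)/p : ℕ) : ZMod p)))) := rfl
  rw [hsplit, foldr_D_add, foldr_D_const t htne,
    foldr_D_comp_hom (ZMod.toAddCircle (N := p))
      t (fun a : ZMod p => -((((a.val + b.val)/p : ℕ) : ZMod p))),
    funcD _ t htlen]
  funext x
  simp

end ZModLemmas

lemma foldr_D_proj {p n : ℕ} (g : ZMod p → AddCircle (1:ℝ)) (i : Fin n)
    (hs : List (Fin n → ZMod p)) :
    hs.foldr D (fun x => g (x i)) =
      fun x => (hs.map (fun h => h i)).foldr D g (x i) := by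
  induction hs with
  | nil => rfl
  | cons h t ih =>
    simp only [List.foldr, List.map, ih]
    funext x
    simp [D]

/-- `f(x) = (∑ |x_i|)/p² mod 1` is a nonclassical polynomial of degree at most `p`. -/
theorem stmt1 (p n : ℕ) [Fact p.Prime]
    (f : (Fin n → ZMod p) → AddCircle (1 : ℝ))
    (hf : ∀ x, f x = ((((∑ i, ((x i).val : ℝ)) / (p ^ 2 : ℝ)) : ℝ) : AddCircle (1 : ℝ))) :
    IsNCPoly p f := by
  have hfsum : f = ∑ i : Fin n,
      (fun x : Fin n → ZMod p => ((((x i).val : ℝ) / (p^2:ℝ) : ℝ) : AddCircle (1:ℝ))) := by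
    funext x
    rw [hf x, Finset.sum_apply]
    rw [Finset.sum_div]
    exact map_sum (QuotientAddGroup.mk' (AddSubgroup.zmultiples (1:ℝ)))
      (fun i => ((x i).val : ℝ) / (p^2:ℝ)) univ
  intro hs hlen
  rw [hfsum, foldr_D_sum]
  apply Finset.sum_eq_zero
  intro i _
  rw [foldr_D_proj (fun a : ZMod p => (((a.val : ℝ) / (p^2:ℝ) : ℝ) : AddCircle (1:ℝ))) i hs,
    gNC (hs.map (fun h => h i)) (by simp [hlen])]
  funext x
  simp
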